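/- The quasi-polynomial r_p(s) = (s+3) + 2(s−1)e^{-0.4 s} has infinitely many zeros in the open right half-plane; moreover there is a sequence of zeros s_k with Re(s_k) → (5/2)·ln 2 and Im(s_k) → −∞. -/

import Mathlib

open Complex Filter
open scoped NNReal

namespace Stmt18Aux

noncomputable def w (s : ℂ) : ℂ := 2 * (s - 1) / (s + 3)

noncomputable def T (M : ℝ) (s : ℂ) : ℂ := (5/2 : ℂ) * Complex.log (w s) - (M : ℂ) * I

noncomputable def c (M : ℝ) : ℂ := ((5/2 * Real.log 2 : ℝ) : ℂ) - (M : ℂ) * I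

lemma facts {M : ℝ} (hM : 100 ≤ M) {s : ℂ} (hs : s ∈ Metric.closedBall (c M) 1) :
    s.im ≤ -M + 1 ∧ -M - 1 ≤ s.im ∧ M - 1 ≤ ‖s + 3‖ ∧ M - 1 ≤ ‖s - 1‖ ∧ s + 3 ≠ 0 ∧ s - 1 ≠ 0 ∧
      ‖w s - 2‖ ≤ 8 / (M - 1) ∧ w s ∈ Metric.closedBall (2 : ℂ) (1/9) := by
  have hd : ‖s - c M‖ ≤ 1 := by
    simpa [Metric.mem_closedBall, dist_eq_norm] using hs
  have him' : |s.im + M| ≤ 1 := by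
    have h1 : |(s - c M).im| ≤ ‖s - c M‖ := Complex.abs_im_le_norm _
    have h2 : (s - c M).im = s.im + M := by
      simp only [c, Complex.sub_im, Complex.mul_im, Complex.ofReal_im, Complex.ofReal_re,
        Complex.I_im, Complex.I_re]
      ring
    rw [h2] at h1; linarith
  have him : s.im ≤ -M + 1 := by
    have := (abs_le.mp him').2; linarith
  have himlb : -M - 1 ≤ s.im := by
    have := (abs_le.mp him').1; linarith
  have himneg : s.im ≤ -99 := by linarith
  have hsim : M - 1 ≤ |s.im| := by
    rw [abs_of_nonpos (by linarith)]; linarith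
  have h3 : M - 1 ≤ ‖s + 3‖ := by
    have h := Complex.abs_im_le_norm (s + 3)
    have heq : (s + 3).im = s.im := by simp
    rw [heq] at h
    linarith [hsim]
  have h1 : M - 1 ≤ ‖s - 1‖ := by
    have h := Complex.abs_im_le_norm (s - 1)
    have heq : (s - 1).im = s.im := by simp
    rw [heq] at h
    linarith [hsim]
  have hne3 : s + 3 ≠ 0 := by
    intro h; rw [h] at h3; simp at h3; linarith
  have hne1 : s - 1 ≠ 0 := by
    intro h; rw [h] at h1; simp at h1; linarith
  have hw2 : w s - 2 = -8 / (s + 3) := by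
    rw [w]; field_simp; ring
  have hwnorm : ‖w s - 2‖ ≤ 8 / (M - 1) := by
    rw [hw2]
    rw [norm_div]
    have h8 : ‖(-8 : ℂ)‖ = 8 := by norm_num
    rw [h8]
    gcongr
    · linarith
  have hwball : w s ∈ Metric.closedBall (2 : ℂ) (1/9) := by
    rw [Metric.mem_closedBall, dist_eq_norm]
    calc ‖w s - 2‖ ≤ 8 / (M - 1) := hwnorm
      _ ≤ 8 / 99 := by gcongr <;> linarith
      _ ≤ 1/9 := by norm_num
  exact ⟨him, himlb, h3, h1, hne3, hne1, hwnorm, hwball⟩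

lemma log_lip {z1 z2 : ℂ} (h1 : z1 ∈ Metric.closedBall (2 : ℂ) (1/9))
    (h2 : z2 ∈ Metric.closedBall (2 : ℂ) (1/9)) :
    ‖Complex.log z1 - Complex.log z2‖ ≤ (9/17) * ‖z1 - z2‖ := by
  have hre : ∀ z ∈ Metric.closedBall (2 : ℂ) (1/9), (17/9 : ℝ) ≤ z.re := by
    intro z hz
    have hd : ‖z - 2‖ ≤ 1/9 := by simpa [Metric.mem_closedBall, dist_eq_norm] using hz
    have : |(z - 2).re| ≤ ‖z - 2‖ := Complex.abs_re_le_norm _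
    have h2 : (z - 2).re = z.re - 2 := by simp
    rw [h2] at this
    have := (abs_le.mp (this.trans hd)).1
    linarith
  have hslit : ∀ z ∈ Metric.closedBall (2 : ℂ) (1/9), z ∈ Complex.slitPlane := by
    intro z hz
    exact Complex.mem_slitPlane_iff.mpr (Or.inl (by linarith [hre z hz]))
  apply Convex.norm_image_sub_le_of_norm_hasDerivWithin_le
    (f' := fun z => z⁻¹)
    (fun z hz => (Complex.hasDerivAt_log (hslit z hz)).hasDerivWithinAt)
    (fun z hz => ?_) (convex_closedBall _ _) h2 h1
  have hz17 : (17/9 : ℝ) ≤ ‖z‖ := le_trans (hre z hz) (by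
    calc z.re ≤ |z.re| := le_abs_self _
      _ ≤ ‖z‖ := Complex.abs_re_le_norm _)
  rw [norm_inv]
  rw [inv_le_comm₀ (by linarith) (by norm_num)]
  linarith

lemma T_re (M : ℝ) (s : ℂ) : (T M s).re = 5/2 * Real.log ‖w s‖ := by
  rw [T, Complex.sub_re, show (5/2 : ℂ) = ((5/2 : ℝ) : ℂ) by norm_num,
    Complex.re_ofReal_mul, Complex.log_re]
  simp

lemma exists_fp (M : ℝ) (hM : 100 ≤ M) :
    ∃ s : ℂ, s ∈ Metric.closedBall (c M) 1 ∧ T M s = s := by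
  have hlog2 : ((5/2 * Real.log 2 : ℝ) : ℂ) = (5/2 : ℂ) * Complex.log 2 := by
    rw [show ((2:ℂ)) = ((2:ℝ) : ℂ) by norm_num, ← Complex.ofReal_log (by norm_num : (0:ℝ) ≤ 2)]
    push_cast; ring
  have h2ball : (2 : ℂ) ∈ Metric.closedBall (2 : ℂ) (1/9) := by
    simp
  have hmaps : Set.MapsTo (T M) (Metric.closedBall (c M) 1) (Metric.closedBall (c M) 1) := by
    intro s hs
    obtain ⟨-, -, -, -, -, -, hwn, hwb⟩ := facts hM hs
    rw [Metric.mem_closedBall, dist_eq_norm]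
    have hTc : T M s - c M = (5/2 : ℂ) * (Complex.log (w s) - Complex.log 2) := by
      rw [T, c, hlog2]; ring
    rw [hTc]
    rw [norm_mul]
    have h52 : ‖(5/2 : ℂ)‖ = 5/2 := by norm_num
    rw [h52]
    have hll := log_lip hwb h2ball
    have hwn' : ‖w s - 2‖ ≤ 1/9 := by
      calc ‖w s - 2‖ ≤ 8 / (M - 1) := hwn
        _ ≤ 8/99 := by gcongr <;> linarith
        _ ≤ 1/9 := by norm_num
    calc (5/2 : ℝ) * ‖Complex.log (w s) - Complex.log 2‖
        ≤ 5/2 * ((9/17) * ‖w s - 2‖) := by gcongr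
      _ ≤ 5/2 * ((9/17) * (1/9)) := by gcongr
      _ ≤ 1 := by norm_num
  have hlip : LipschitzOnWith (1/2 : ℝ≥0) (T M) (Metric.closedBall (c M) 1) := by
    apply LipschitzOnWith.of_dist_le_mul
    intro s1 h1 s2 h2
    obtain ⟨-, -, h31, -, hne31, hne11, -, hwb1⟩ := facts hM h1
    obtain ⟨-, -, h32, -, hne32, hne12, -, hwb2⟩ := facts hM h2
    rw [dist_eq_norm, dist_eq_norm]
    have hT : T M s1 - T M s2 = (5/2 : ℂ) * (Complex.log (w s1) - Complex.log (w s2)) := by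
      rw [T, T]; ring
    have hwdiff : w s1 - w s2 = 8 * (s1 - s2) / ((s1 + 3) * (s2 + 3)) := by
      rw [w, w]; field_simp; ring
    have hwnd : ‖w s1 - w s2‖ ≤ 8 / ((M-1)*(M-1)) * ‖s1 - s2‖ := by
      have h8 : ‖(8 : ℂ)‖ = 8 := by norm_num
      have hrhs : (8:ℝ) / ((M-1)*(M-1)) * ‖s1 - s2‖ = 8 * ‖s1 - s2‖ / ((M-1)*(M-1)) := by
        ring
      rw [hwdiff, norm_div, norm_mul, norm_mul, h8, hrhs]
      gcongr <;> nlinarith [norm_nonneg (s1 - s2)]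
    rw [hT, norm_mul]
    have h52 : ‖(5/2 : ℂ)‖ = 5/2 := by norm_num
    rw [h52]
    have hll := log_lip hwb1 hwb2
    have hK : ((1/2 : ℝ≥0) : ℝ) = 1/2 := by norm_num
    rw [hK]
    calc (5/2 : ℝ) * ‖Complex.log (w s1) - Complex.log (w s2)‖
        ≤ 5/2 * ((9/17) * ‖w s1 - w s2‖) := by gcongr
      _ ≤ 5/2 * ((9/17) * (8 / ((M-1)*(M-1)) * ‖s1 - s2‖)) := by gcongr
      _ = (5/2 * (9/17) * (8 / ((M-1)*(M-1)))) * ‖s1 - s2‖ := by ring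
      _ ≤ (1/2) * ‖s1 - s2‖ := by
          apply mul_le_mul_of_nonneg_right ?_ (norm_nonneg _)
          have hM1 : (99:ℝ) ≤ M - 1 := by linarith
          have h99 : (8 : ℝ) / ((M-1)*(M-1)) ≤ 8 / (99*99) := by gcongr <;> nlinarith
          nlinarith
  have hcmem : c M ∈ Metric.closedBall (c M) 1 := Metric.mem_closedBall_self (by norm_num)
  obtain ⟨y, hyB, hfix, -, -⟩ := ContractingWith.exists_fixedPoint'
    (Metric.isClosed_closedBall.isComplete) hmaps
    ⟨by exact_mod_cast (show ((1/2 : ℝ≥0) : ℝ) < 1 by norm_num), hlip.mapsToRestrict hmaps⟩ hcmem (edist_ne_top _ _)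
  exact ⟨y, hyB, hfix⟩

lemma fp_zero (m : ℕ) {s : ℂ} (hM : 100 ≤ (5/2*(2*(m:ℝ)+1)*Real.pi))
    (hball : s ∈ Metric.closedBall (c (5/2*(2*(m:ℝ)+1)*Real.pi)) 1)
    (hfix : T (5/2*(2*(m:ℝ)+1)*Real.pi) s = s) :
    (s + 3) + 2 * (s - 1) * Complex.exp (-(0.4 : ℂ) * s) = 0 := by
  obtain ⟨-, -, -, -, hne3, hne1, -, -⟩ := facts hM hball
  have hw0 : w s ≠ 0 := div_ne_zero (mul_ne_zero two_ne_zero hne1) hne3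
  have h := hfix
  rw [T] at h
  have key : (2/5 : ℂ) * s = Complex.log (w s) - ((2*(m:ℂ)+1)) * (Real.pi * I) := by
    push_cast at h ⊢
    linear_combination (-2/5 : ℂ) * h
  have hexpodd : Complex.exp (((2*(m:ℂ)+1)) * (Real.pi * I)) = -1 := by
    have : ((2*(m:ℂ)+1)) * (Real.pi * I) = ((2*m+1 : ℕ) : ℂ) * (Real.pi * I) := by push_cast; ring
    rw [this, Complex.exp_nat_mul, Complex.exp_pi_mul_I]
    exact Odd.neg_one_pow ⟨m, by ring⟩
  have hexp : Complex.exp ((2/5 : ℂ) * s) = -(w s) := by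
    rw [key, Complex.exp_sub, Complex.exp_log hw0, hexpodd]
    field_simp
  have hexpneg : Complex.exp (-(0.4 : ℂ) * s) = (-(w s))⁻¹ := by
    rw [show -(0.4 : ℂ) * s = -((2/5 : ℂ) * s) by norm_num, Complex.exp_neg, hexp]
  rw [hexpneg, w]
  field_simp
  ring

end Stmt18Aux

open Stmt18Aux in
theorem stmt18 :
    {s : ℂ | 0 < s.re ∧ (s + 3) + 2 * (s - 1) * Complex.exp (-(0.4 : ℂ) * s) = 0}.Infinite ∧
    ∃ s : ℕ → ℂ,
      (∀ k, 0 < (s k).re ∧ (s k + 3) + 2 * (s k - 1) * Complex.exp (-(0.4 : ℂ) * s k) = 0) ∧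
      Tendsto (fun k => (s k).re) atTop (nhds ((5 : ℝ) / 2 * Real.log 2)) ∧
      Tendsto (fun k => (s k).im) atTop atBot := by
  have hpi := Real.pi_gt_three
  set Mf : ℕ → ℝ := fun m => 5/2*(2*((m + 100 : ℕ) : ℝ)+1)*Real.pi with hMf
  have hMle : ∀ m : ℕ, 100 ≤ Mf m ∧ (m : ℝ) + 2 ≤ Mf m := by
    intro m
    have hc : ((m + 100 : ℕ) : ℝ) = (m : ℝ) + 100 := by push_cast; ring
    constructor <;> · simp only [hMf, hc]; nlinarith [Nat.cast_nonneg (α := ℝ) m]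
  choose sc hball hfix using fun m => exists_fp (Mf m) (hMle m).1
  have hfacts := fun m => facts (hMle m).1 (hball m)
  -- real-part formula
  have hre : ∀ m, (sc m).re = 5/2 * Real.log ‖w (sc m)‖ := by
    intro m
    conv_lhs => rw [← hfix m]
    exact T_re _ _
  have habs2 : ∀ m, |‖w (sc m)‖ - 2| ≤ 8 / (Mf m - 1) := by
    intro m
    obtain ⟨-, -, -, -, -, -, hwn, -⟩ := hfacts m
    have h := abs_norm_sub_norm_le (w (sc m)) 2
    rw [show ‖(2:ℂ)‖ = 2 by norm_num] at h
    exact h.trans hwn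
  -- zeros and positivity
  have hzero : ∀ m, (sc m + 3) + 2 * (sc m - 1) * Complex.exp (-(0.4 : ℂ) * sc m) = 0 := by
    intro m
    exact fp_zero (m + 100) (hMle m).1 (hball m) (hfix m)
  have hpos : ∀ m, 0 < (sc m).re := by
    intro m
    rw [hre m]
    have h2 := habs2 m
    have h8 : (8 : ℝ) / (Mf m - 1) ≤ 8/99 := by
      have := (hMle m).1
      gcongr <;> linarith
    have : (1 : ℝ) < ‖w (sc m)‖ := by
      have := abs_le.mp (h2.trans h8)
      linarith [this.1]
    have hl := Real.log_pos this
    linarith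
  have hmem : ∀ m, sc m ∈ {s : ℂ | 0 < s.re ∧
      (s + 3) + 2 * (s - 1) * Complex.exp (-(0.4 : ℂ) * s) = 0} := fun m => ⟨hpos m, hzero m⟩
  -- imaginary parts
  have himub : ∀ m, (sc m).im ≤ -Mf m + 1 := fun m => (hfacts m).1
  have himlb : ∀ m, -Mf m - 1 ≤ (sc m).im := fun m => (hfacts m).2.1
  have hanti : StrictAnti (fun m => (sc m).im) := by
    intro a b hab
    have hab1 : (a : ℝ) + 1 ≤ (b : ℝ) := by exact_mod_cast hab
    have hMd : Mf a + 2 < Mf b := by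
      have hca : ((a + 100 : ℕ) : ℝ) = (a : ℝ) + 100 := by push_cast; ring
      have hcb : ((b + 100 : ℕ) : ℝ) = (b : ℝ) + 100 := by push_cast; ring
      simp only [hMf, hca, hcb]
      nlinarith
    calc (sc b).im ≤ -Mf b + 1 := himub b
      _ < -Mf a - 1 := by linarith
      _ ≤ (sc a).im := himlb a
  have hinj : Function.Injective sc := by
    intro a b hab
    exact hanti.injective (by rw [hab])
  refine ⟨Set.infinite_of_injective_forall_mem hinj hmem, sc, fun m => ⟨hpos m, hzero m⟩, ?_, ?_⟩
  · -- real parts tendsto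
    have habs_t : Tendsto (fun m => ‖w (sc m)‖) atTop (nhds 2) := by
      rw [tendsto_iff_dist_tendsto_zero]
      refine squeeze_zero (g := fun m : ℕ => 8 / ((m : ℝ) + 1)) (fun m => dist_nonneg)
        (fun m => ?_) ?_
      · rw [Real.dist_eq]
        refine (habs2 m).trans ?_
        have h1 := (hMle m).1
        have h2 := (hMle m).2
        rw [div_le_div_iff₀ (by linarith) (by positivity)]
        nlinarith
      · exact tendsto_const_nhds.div_atTop
          (tendsto_atTop_add_const_right atTop 1 tendsto_natCast_atTop_atTop)
    have hlt : Tendsto (fun m => 5/2 * Real.log ‖w (sc m)‖) atTop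
        (nhds (5/2 * Real.log 2)) :=
      (((Real.continuousAt_log (by norm_num)).tendsto).comp habs_t).const_mul (5/2)
    exact hlt.congr (fun m => (hre m).symm)
  · -- imaginary parts tendsto
    have hlast : ∀ m : ℕ, (sc m).im ≤ -((m : ℝ)) := by
      intro m
      have := (hMle m).2
      linarith [himub m]
    exact tendsto_atBot_mono hlast
      (tendsto_neg_atTop_atBot.comp tendsto_natCast_atTop_atTop)
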